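/- Let f : [a,b] → ℝ be continuous and integrable on [a,b] with 0 ≤ a < b, and suppose f is (α,m)-convex for some fixed (α,m) ∈ (0,1]². Then for any fixed p, q > 0, ∫_a^b (x-a)^p (b-x)^q f(x) dx ≤ (b-a)^{p+q+1} [β(q+1, p+α+1) f(b) + m(β(q+1, p+1) − β(q+1, p+α+1)) f(a/m)]. -/

import Mathlib

open Real Set MeasureTheory intervalIntegral

noncomputable def beta (x y : ℝ) : ℝ := ∫ t in (0:ℝ)..1, t ^ (x-1) * (1-t) ^ (y-1)

def AMConvexOn (s : Set ℝ) (α m : ℝ) (g : ℝ → ℝ) : Prop :=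
  ∀ x ∈ s, ∀ y ∈ s, ∀ t ∈ Set.Icc (0:ℝ) 1, g (t*x + m*(1-t)*y) ≤ t ^ α * g x + m*(1 - t ^ α) * g y

lemma cont_rpow (r : ℝ) (hr : 0 < r) : Continuous (fun x : ℝ => x ^ r) := by
  rw [continuous_iff_continuousAt]
  exact fun x => Real.continuousAt_rpow_const x r (Or.inr hr.le)

lemma Iaux (a b r q : ℝ) (hab : a < b) (hr : 0 < r) (hq : 0 < q) :
    ∫ x in a..b, (x-a)^r * (b-x)^q = (b-a)^(r+q+1) * beta (q+1) (r+1) := by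
  have hba : (0:ℝ) < b - a := by linarith
  have hg : Continuous (fun x : ℝ => (x-a)^r * (b-x)^q) := by
    exact ((cont_rpow r hr).comp (continuous_id.sub continuous_const)).mul
      ((cont_rpow q hq).comp (continuous_const.sub continuous_id))
  have key := intervalIntegral.integral_comp_smul_deriv (a := (0:ℝ)) (b := 1)
    (f := fun t => b - t*(b-a)) (f' := fun _ => -(b-a))
    (g := fun x : ℝ => (x-a)^r * (b-x)^q)
    (fun t _ => by
      simpa [mul_comm] using ((hasDerivAt_id t).const_mul (b-a)).const_sub b
      ) continuousOn_const hg
  simp only [smul_eq_mul] at key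
  have h0 : b - 0*(b-a) = b := by ring
  have h1 : b - 1*(b-a) = a := by ring
  rw [h0, h1] at key
  have key2 : ∫ t in (0:ℝ)..1, -(b-a) * ((b - t*(b-a) - a)^r * (b - (b - t*(b-a)))^q)
      = -∫ x in a..b, (x-a)^r * (b-x)^q := by
    rw [← intervalIntegral.integral_symm]; exact key
  have congr1 : ∀ t ∈ Set.uIcc (0:ℝ) 1,
      (b - t*(b-a) - a)^r * (b - (b - t*(b-a)))^q
      = (b-a)^(r+q) * (t^q * (1-t)^r) := by
    intro t ht
    rw [Set.uIcc_of_le (by norm_num)] at ht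
    obtain ⟨ht0, ht1⟩ := ht
    have e1 : b - t*(b-a) - a = (1-t)*(b-a) := by ring
    have e2 : b - (b - t*(b-a)) = t*(b-a) := by ring
    rw [e1, e2, Real.mul_rpow (by linarith) hba.le, Real.mul_rpow ht0 hba.le,
      Real.rpow_add' hba.le (by positivity)]
    ring
  have : (∫ t in (0:ℝ)..1, (b - t*(b-a) - a)^r * (b - (b - t*(b-a)))^q)
      = (b-a)^(r+q) * ∫ t in (0:ℝ)..1, t^q * (1-t)^r := by
    rw [intervalIntegral.integral_congr congr1, intervalIntegral.integral_const_mul]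
  rw [intervalIntegral.integral_const_mul, this] at key2
  have hbeta : beta (q+1) (r+1) = ∫ t in (0:ℝ)..1, t^q * (1-t)^r := by
    unfold beta; norm_num
  rw [hbeta]
  have e : (b-a)^(r+q+1) = (b-a)^(r+q) * (b-a) := by
    rw [Real.rpow_add' hba.le (by positivity), Real.rpow_one]
  rw [e]
  linear_combination key2

theorem stmt2 (a b p q : ℝ) (f : ℝ → ℝ)
    (ha : 0 ≤ a) (hab : a < b) (hp : 0 < p) (hq : 0 < q)
    (hcont : ContinuousOn f (Set.Icc a b))
    (hint : IntervalIntegrable f volume a b)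
    (α m : ℝ) (hα : α ∈ Set.Ioc (0:ℝ) 1) (hm : m ∈ Set.Ioc (0:ℝ) 1)
    (hf : AMConvexOn (Set.Icc 0 (max b (a/m))) α m f) :
    ∫ x in a..b, (x-a)^p * (b-x)^q * f x
      ≤ (b-a)^(p+q+1) * (beta (q+1) (p+α+1) * f b
          + m * (beta (q+1) (p+1) - beta (q+1) (p+α+1)) * f (a/m)) := by
  obtain ⟨hα0, hα1⟩ := hα
  obtain ⟨hm0, hm1⟩ := hm
  have hba : (0:ℝ) < b - a := by linarith
  have hbaα : (0:ℝ) < (b-a)^α := Real.rpow_pos_of_pos hba α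
  set c1 : ℝ := (f b - m * f (a/m)) / (b-a)^α with hc1
  set c2 : ℝ := m * f (a/m) with hc2
  -- pointwise bound
  have hpt : ∀ x ∈ Set.Icc a b, (x-a)^p * (b-x)^q * f x
      ≤ c1 * ((x-a)^(p+α) * (b-x)^q) + c2 * ((x-a)^p * (b-x)^q) := by
    intro x hx
    obtain ⟨hxa, hxb⟩ := hx
    set t : ℝ := (x-a)/(b-a) with htdef
    have ht : t ∈ Set.Icc (0:ℝ) 1 :=
      ⟨div_nonneg (by linarith) hba.le, (div_le_one hba).2 (by linarith)⟩
    have hbmem : b ∈ Set.Icc 0 (max b (a/m)) := ⟨by linarith, le_max_left _ _⟩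
    have ham : a/m ∈ Set.Icc 0 (max b (a/m)) := ⟨div_nonneg ha hm0.le, le_max_right _ _⟩
    have hconv := hf b hbmem (a/m) ham t ht
    have hx' : t*b + m*(1-t)*(a/m) = x := by
      have h1 : m*(1-t)*(a/m) = (1-t)*a := by
        field_simp
      have h2 : t*(b-a) = x - a := div_mul_cancel₀ _ hba.ne'
      rw [h1]; linear_combination h2
    rw [hx'] at hconv
    have hw : 0 ≤ (x-a)^p * (b-x)^q :=
      mul_nonneg (Real.rpow_nonneg (by linarith) p) (Real.rpow_nonneg (by linarith) q)
    calc (x-a)^p * (b-x)^q * f x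
        ≤ (x-a)^p * (b-x)^q * (t^α * f b + m*(1 - t^α) * f (a/m)) :=
          mul_le_mul_of_nonneg_left hconv hw
      _ = c1 * ((x-a)^(p+α) * (b-x)^q) + c2 * ((x-a)^p * (b-x)^q) := by
          rw [htdef, Real.div_rpow (by linarith) hba.le,
            Real.rpow_add' (x := x-a) (by linarith) (show p+α ≠ 0 by positivity)]
          rw [hc1, hc2]
          field_simp
          ring
  -- integrability
  have h1 : IntervalIntegrable (fun x => (x-a)^p * (b-x)^q * f x) volume a b := by
    have hc : ContinuousOn (fun x : ℝ => (x-a)^p * (b-x)^q) (Set.uIcc a b) :=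
      (((cont_rpow p hp).comp (continuous_id.sub continuous_const)).mul
        ((cont_rpow q hq).comp (continuous_const.sub continuous_id))).continuousOn
    exact hint.continuousOn_mul hc
  have hg2 : Continuous (fun x : ℝ => c1 * ((x-a)^(p+α) * (b-x)^q) + c2 * ((x-a)^p * (b-x)^q)) := by
    have A : Continuous (fun x : ℝ => (x-a)^(p+α) * (b-x)^q) :=
      ((cont_rpow (p+α) (by positivity)).comp (continuous_id.sub continuous_const)).mul
        ((cont_rpow q hq).comp (continuous_const.sub continuous_id))
    have B : Continuous (fun x : ℝ => (x-a)^p * (b-x)^q) :=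
      ((cont_rpow p hp).comp (continuous_id.sub continuous_const)).mul
        ((cont_rpow q hq).comp (continuous_const.sub continuous_id))
    exact (continuous_const.mul A).add (continuous_const.mul B)
  have h2 := hg2.intervalIntegrable (μ := volume) a b
  have step := intervalIntegral.integral_mono_on hab.le h1 h2 hpt
  have hA : Continuous (fun x : ℝ => (x-a)^(p+α) * (b-x)^q) :=
    ((cont_rpow (p+α) (by positivity)).comp (continuous_id.sub continuous_const)).mul
      ((cont_rpow q hq).comp (continuous_const.sub continuous_id))
  have hB : Continuous (fun x : ℝ => (x-a)^p * (b-x)^q) :=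
    ((cont_rpow p hp).comp (continuous_id.sub continuous_const)).mul
      ((cont_rpow q hq).comp (continuous_const.sub continuous_id))
  have hsplit : (∫ x in a..b, (c1 * ((x-a)^(p+α) * (b-x)^q) + c2 * ((x-a)^p * (b-x)^q)))
      = c1 * (∫ x in a..b, (x-a)^(p+α) * (b-x)^q)
        + c2 * (∫ x in a..b, (x-a)^p * (b-x)^q) := by
    rw [intervalIntegral.integral_add (f := fun x => c1 * ((x-a)^(p+α) * (b-x)^q))
      (g := fun x => c2 * ((x-a)^p * (b-x)^q))
      ((continuous_const.mul hA).intervalIntegrable a b)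
      ((continuous_const.mul hB).intervalIntegrable a b),
      intervalIntegral.integral_const_mul, intervalIntegral.integral_const_mul]
  rw [hsplit] at step
  have IA := Iaux a b (p+α) q hab (by positivity) hq
  have IB := Iaux a b p q hab hp hq
  rw [IA, IB] at step
  refine step.trans_eq ?_
  have hpow : (b-a)^(p+α+q+1) = (b-a)^(p+q+1) * (b-a)^α := by
    have e : p+α+q+1 = (p+q+1)+α := by ring
    rw [e, Real.rpow_add hba]
  rw [hpow, hc1, hc2]
  field_simp
  ring
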